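/- Let σ: K → K⁺ be a primitive generalized substitution on an alphabet space K. Then the generalized subshift (X_σ, S), consisting of all bi-infinite sequences over K all of whose finite subwords belong to L(σ), is minimal. -/

import Mathlib

open Set Filter

/-- Return time function `r_A(x) = inf {n > 0 : Tⁿ x ∈ A}`. -/
noncomputable def retTime {α : Type*} (T : α → α) (A : Set α) (x : α) : ℕ :=
  sInf {n : ℕ | 0 < n ∧ T^[n] x ∈ A}

/-- The shift by `n`: `(shiftZ n x) t = x (t + n)`. -/
def shiftZ {A : Type*} (n : ℤ) (x : ℤ → A) : ℤ → A := fun t => x (t + n)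

/-- The extension of a substitution to words, by concatenation. -/
def substWord {A : Type*} (σ : A → List A) (w : List A) : List A :=
  w.foldr (fun a r => σ a ++ r) []

/-- The word `x[i..j]` read off a bi-infinite sequence. -/
def window {A : Type*} (x : ℤ → A) (i j : ℤ) : List A :=
  (List.range (j - i + 1).toNat).map fun t => x (i + t)

section Gen

variable {K : Type*} [MetricSpace K] [CompactSpace K] [TotallyDisconnectedSpace K]
  [Nontrivial K] [Inhabited K]

/-- A generalized substitution: images are nonempty words, the length function is
continuous, and each coordinate projection is continuous where defined. -/
def IsGenSubst (σ : K → List K) : Prop :=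
  (∀ a, σ a ≠ []) ∧ Continuous (fun a => (σ a).length) ∧
    ∀ j : ℕ, ContinuousOn (fun a => (σ a).getD j default) {a | j < (σ a).length}

/-- Primitivity: for every nonempty open `V ⊆ K` there is `j` such that for every
letter `a` and every `k ≥ j`, some letter of `σᵏ(a)` lies in `V`. -/
def GPrimitive (σ : K → List K) : Prop :=
  ∀ V : Set K, IsOpen V → V.Nonempty →
    ∃ j : ℕ, ∀ a : K, ∀ k : ℕ, j ≤ k → ∃ c ∈ (substWord σ)^[k] [a], c ∈ V

/-- Starting position of the `i`-th block in the concatenation `… σ(x₋₁).σ(x₀)σ(x₁) …`. -/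
def blockStart (σ : K → List K) (x : ℤ → K) : ℤ → ℤ := fun i =>
  if 0 ≤ i then (∑ t ∈ Finset.range i.toNat, ((σ (x t)).length : ℤ))
  else -(∑ t ∈ Finset.range (-i).toNat, ((σ (x (-((t : ℤ) + 1)))).length : ℤ))

/-- `E` is the extension of `σ` to bi-infinite sequences: it maps `x` to the
concatenation of the words `σ(x_i)`, with `σ(x₀)` starting at position `0`. -/
def IsSubstExt (σ : K → List K) (E : (ℤ → K) → (ℤ → K)) : Prop :=
  ∀ (x : ℤ → K) (i : ℤ) (j : ℕ), j < (σ (x i)).length →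
    E x (blockStart σ x i + j) = (σ (x i)).getD j default

/-- The language generated by a letter `a`: limits of subwords of the `σᵏ(a)`. -/
def GLang (σ : K → List K) (a : K) : Set (List K) :=
  closure {w : List K | ∃ k : ℕ, w <:+: (substWord σ)^[k] [a]}

/-- The generalized substitution subshift. -/
def GXsub (σ : K → List K) : Set (ℤ → K) :=
  {x | ∀ i j : ℤ, i ≤ j → window x i j ∈ ⋃ a : K, GLang σ a}

end Gen


section WordLemmas

variable {A : Type*}

theorem substWord_eq_flatten (σ : A → List A) (w : List A) :
    substWord σ w = (w.map σ).flatten := by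
  induction w with
  | nil => rfl
  | cons a w ih =>
    show σ a ++ substWord σ w = _
    rw [ih]; simp

theorem substWord_append (σ : A → List A) (u v : List A) :
    substWord σ (u ++ v) = substWord σ u ++ substWord σ v := by
  simp [substWord_eq_flatten]

theorem iter_substWord_append (σ : A → List A) (k : ℕ) (u v : List A) :
    (substWord σ)^[k] (u ++ v) = (substWord σ)^[k] u ++ (substWord σ)^[k] v := by
  induction k generalizing u v with
  | zero => rfl
  | succ k ih =>
    rw [Function.iterate_succ_apply, Function.iterate_succ_apply,
      Function.iterate_succ_apply, substWord_append, ih]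

theorem iter_substWord_nil (σ : A → List A) (k : ℕ) :
    (substWord σ)^[k] ([] : List A) = [] := by
  induction k with
  | zero => rfl
  | succ k ih => rw [Function.iterate_succ_apply, show substWord σ [] = [] from rfl, ih]

theorem iter_substWord_flatten (σ : A → List A) (k : ℕ) (w : List A) :
    (substWord σ)^[k] w = (w.map fun c => (substWord σ)^[k] [c]).flatten := by
  induction w with
  | nil => simp [iter_substWord_nil]
  | cons c w ih =>
    rw [show c :: w = [c] ++ w from rfl, iter_substWord_append, ih]
    simp

theorem substWord_ne_nil {σ : A → List A} (hσ : ∀ a, σ a ≠ []) {w : List A}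
    (hw : w ≠ []) : substWord σ w ≠ [] := by
  cases w with
  | nil => exact absurd rfl hw
  | cons a w =>
    show σ a ++ substWord σ w ≠ []
    simp [hσ a]

theorem iter_substWord_ne_nil {σ : A → List A} (hσ : ∀ a, σ a ≠ []) (k : ℕ) (a : A) :
    (substWord σ)^[k] [a] ≠ [] := by
  induction k with
  | zero => simp
  | succ k ih => rw [Function.iterate_succ_apply']; exact substWord_ne_nil hσ ih

theorem substWord_length_le {σ : A → List A} {C : ℕ} (hC : ∀ a, (σ a).length ≤ C)
    (w : List A) : (substWord σ w).length ≤ C * w.length := by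
  rw [substWord_eq_flatten, List.length_flatten, List.map_map]
  calc (List.map (List.length ∘ σ) w).sum ≤ (List.map (List.length ∘ σ) w).length • C :=
        List.sum_le_card_nsmul _ _ (by
          intro x hx
          obtain ⟨a, _, rfl⟩ := List.mem_map.1 hx
          exact hC a)
    _ = C * w.length := by simp [Nat.mul_comm]

theorem iter_substWord_length_le {σ : A → List A} {C : ℕ} (hC : ∀ a, (σ a).length ≤ C)
    (k : ℕ) (a : A) : ((substWord σ)^[k] [a]).length ≤ C ^ k := by
  induction k with
  | zero => simp
  | succ k ih =>
    rw [Function.iterate_succ_apply']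
    calc (substWord σ ((substWord σ)^[k] [a])).length ≤ C * ((substWord σ)^[k] [a]).length :=
          substWord_length_le hC _
      _ ≤ C * C ^ k := Nat.mul_le_mul_left _ ih
      _ = C ^ (k + 1) := by ring

theorem infix_of_mem_flatten {c : A} {w : List A} (f : A → List A) (hc : c ∈ w) :
    f c <:+: (w.map f).flatten := by
  obtain ⟨s, t, rfl⟩ := List.append_of_mem hc
  exact ⟨(s.map f).flatten, (t.map f).flatten, by simp⟩

theorem head_block_prefix {f : A → List A} {L : ℕ} {c : A} {w : List A} {u : List A}
    (hc : (f c).length ≤ L) (hu : u <+: ((c :: w).map f).flatten) (hlen : L ≤ u.length) :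
    f c <+: u := by
  refine List.prefix_of_prefix_length_le ?_ hu (le_trans hc hlen)
  simpa using List.prefix_append (f c) ((w.map f).flatten)

theorem exists_block_infix (f : A → List A) (L : ℕ) (hL : 1 ≤ L) :
    ∀ (w : List A) (u : List A), (∀ c ∈ w, (f c).length ≤ L ∧ f c ≠ []) →
    u <:+: (w.map f).flatten → 2 * L ≤ u.length → ∃ c ∈ w, f c <:+: u := by
  intro w
  induction w with
  | nil =>
    intro u _ hu hlen
    rw [List.map_nil, List.flatten_nil] at hu
    have := hu.length_le
    simp only [List.length_nil] at this
    omega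
  | cons c w ih =>
    intro u hblocks hu hlen
    obtain ⟨s, t, hst⟩ := hu
    have hfc : (f c).length ≤ L := (hblocks c List.mem_cons_self).1
    have hflat : ((c :: w).map f).flatten = f c ++ (w.map f).flatten := by simp
    rw [hflat] at hst
    by_cases hcase : (f c).length ≤ s.length
    · -- u is an infix of the tail flatten
      have hpre : f c <+: s :=
        List.prefix_of_prefix_length_le ⟨(w.map f).flatten, hst.symm⟩
          ⟨u ++ t, (List.append_assoc s u t).symm⟩ hcase
      obtain ⟨s₁, rfl⟩ := hpre
      have hst' : s₁ ++ u ++ t = (w.map f).flatten := by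
        apply List.append_cancel_left (as := f c)
        rw [← hst]; simp
      obtain ⟨c', hc', hinf⟩ := ih u (fun d hd => hblocks d (List.mem_cons_of_mem _ hd))
        ⟨s₁, t, hst'⟩ hlen
      exact ⟨c', List.mem_cons_of_mem _ hc', hinf⟩
    · push_neg at hcase
      set d : ℕ := (f c).length - s.length with hd
      have hdu : d ≤ u.length := by omega
      -- drop (f c).length from both sides of hst
      have hdrop : u.drop d ++ t = (w.map f).flatten := by
        have h1 := congrArg (List.drop (f c).length) hst
        rw [List.drop_left] at h1
        rw [← h1, show (f c).length = s.length + d by omega, List.append_assoc,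
          List.drop_length_add_append, List.drop_append_of_le_length hdu]
      have hlen2 : L ≤ (u.drop d).length := by
        rw [List.length_drop]; omega
      cases w with
      | nil =>
        exfalso
        simp only [List.map_nil, List.flatten_nil, List.append_eq_nil_iff] at hdrop
        have h1 : u.drop d = [] := hdrop.1
        rw [h1] at hlen2
        simp only [List.length_nil] at hlen2
        omega
      | cons c₂ w₂ =>
        have hpre2 : f c₂ <+: u.drop d :=
          head_block_prefix (hblocks c₂ (List.mem_cons_of_mem _ List.mem_cons_self)).1
            ⟨t, hdrop⟩ hlen2
        exact ⟨c₂, List.mem_cons_of_mem _ List.mem_cons_self,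
          hpre2.isInfix.trans (List.drop_suffix d u).isInfix⟩

theorem getD_middle {A : Type*} [Inhabited A] (s u t : List A) (i : ℕ) (hi : i < u.length) :
    (s ++ u ++ t).getD (s.length + i) default = u.getD i default := by
  rw [List.getD_eq_getElem?_getD, List.getD_eq_getElem?_getD, List.append_assoc,
    List.getElem?_append, if_neg (by omega)]
  simp only [Nat.add_sub_cancel_left]
  rw [List.getElem?_append, if_pos hi]

end WordLemmas

section CloseLemmas

open Topology

variable {K : Type*} [MetricSpace K] [Inhabited K]

/-- Two words are `ε`-close: same length and all coordinates within `ε`. -/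
def GClose (ε : ℝ) (v w : List K) : Prop :=
  v.length = w.length ∧ ∀ i, dist (v.getD i default) (w.getD i default) < ε

theorem gclose_nil {ε : ℝ} (hε : 0 < ε) : GClose ε ([] : List K) [] :=
  ⟨rfl, fun i => by simp [hε]⟩

theorem GClose.append {ε : ℝ} {v₁ w₁ v₂ w₂ : List K} (h₁ : GClose ε v₁ w₁)
    (h₂ : GClose ε v₂ w₂) : GClose ε (v₁ ++ v₂) (w₁ ++ w₂) := by
  refine ⟨by simp [h₁.1, h₂.1], fun i => ?_⟩
  rw [List.getD_eq_getElem?_getD, List.getD_eq_getElem?_getD,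
    List.getElem?_append, List.getElem?_append, h₁.1]
  by_cases hc : i < w₁.length
  · rw [if_pos hc, if_pos hc, ← List.getD_eq_getElem?_getD, ← List.getD_eq_getElem?_getD]
    exact h₁.2 i
  · rw [if_neg hc, if_neg hc, ← List.getD_eq_getElem?_getD, ← List.getD_eq_getElem?_getD]
    exact h₂.2 _

theorem gclose_flatten_map {ε : ℝ} (hε : 0 < ε) :
    ∀ (v w : List K) (f g : K → List K), v.length = w.length →
    (∀ i, i < v.length → GClose ε (f (v.getD i default)) (g (w.getD i default))) →
    GClose ε ((v.map f).flatten) ((w.map g).flatten) := by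
  intro v
  induction v with
  | nil =>
    intro w f g hlen _
    rw [List.length_nil] at hlen
    rw [List.eq_nil_of_length_eq_zero hlen.symm]
    exact gclose_nil hε
  | cons a v ih =>
    intro w f g hlen h
    cases w with
    | nil => simp at hlen
    | cons b w =>
      rw [List.map_cons, List.map_cons, List.flatten_cons, List.flatten_cons]
      refine GClose.append ?_ (ih w f g (by simpa using hlen) ?_)
      · have := h 0 (by simp)
        simpa using this
      · intro i hi
        have := h (i + 1) (by simpa using Nat.succ_lt_succ hi)
        simpa [List.getD_cons_succ] using this

theorem gclose_mem_nhds {ε : ℝ} (hε : 0 < ε) (w : List K) :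
    {v : List K | GClose ε v w} ∈ 𝓝 w := by
  induction w with
  | nil =>
    rw [nhds_nil]
    exact gclose_nil hε
  | cons a w ih =>
    rw [nhds_cons]
    refine Filter.mem_of_superset
      (Filter.seq_mem_seq (Filter.image_mem_map (Metric.ball_mem_nhds a hε)) ih) ?_
    rintro v hv
    obtain ⟨f, ⟨b, hb, rfl⟩, v', hv', rfl⟩ := Set.mem_seq_iff.1 hv
    refine ⟨by simp [hv'.1], fun i => ?_⟩
    cases i with
    | zero => simpa using Metric.mem_ball.1 hb
    | succ i => simpa [List.getD_cons_succ] using hv'.2 i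

theorem closure_extract {S : Set (List K)} {w : List K} (hw : w ∈ closure S)
    {ε : ℝ} (hε : 0 < ε) : ∃ v ∈ S, GClose ε v w := by
  rcases mem_closure_iff_nhds.1 hw _ (gclose_mem_nhds hε w) with ⟨v, hv1, hv2⟩
  exact ⟨v, hv2, hv1⟩

theorem exists_uniform {α : Type*} (l : List α) (P : α → ℝ → Prop)
    (mono : ∀ c ρ ρ', 0 < ρ' → ρ' ≤ ρ → P c ρ → P c ρ')
    (h : ∀ c ∈ l, ∃ ρ > 0, P c ρ) : ∃ ρ > 0, ∀ c ∈ l, P c ρ := by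
  induction l with
  | nil => exact ⟨1, one_pos, by simp⟩
  | cons c l ih =>
    obtain ⟨ρ₁, h1, hp⟩ := h c List.mem_cons_self
    obtain ⟨ρ₂, h2, hl⟩ := ih fun d hd => h d (List.mem_cons_of_mem _ hd)
    refine ⟨min ρ₁ ρ₂, lt_min h1 h2, ?_⟩
    intro d hd
    rcases List.mem_cons.1 hd with rfl | hd
    · exact mono d ρ₁ _ (lt_min h1 h2) (min_le_left _ _) hp
    · exact mono d ρ₂ _ (lt_min h1 h2) (min_le_right _ _) (hl d hd)

theorem subst_cont {σ : K → List K} (hσ : IsGenSubst σ) (c : K) {ε : ℝ} (hε : 0 < ε) :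
    ∃ ρ > 0, ∀ c', dist c' c < ρ → GClose ε (σ c') (σ c) := by
  have hA : IsOpen {a : K | (σ a).length = (σ c).length} :=
    (isOpen_discrete {(σ c).length}).preimage hσ.2.1
  have hj : ∀ j ∈ List.range (σ c).length, ∃ ρ > 0, ∀ c', dist c' c < ρ →
      dist ((σ c').getD j default) ((σ c).getD j default) < ε := by
    intro j hjmem
    rw [List.mem_range] at hjmem
    have hopen : IsOpen {a : K | j < (σ a).length} :=
      (isOpen_discrete {m | j < m}).preimage hσ.2.1
    have hcont : ContinuousAt (fun a => (σ a).getD j default) c :=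
      (hσ.2.2 j).continuousAt (hopen.mem_nhds hjmem)
    obtain ⟨δ, hδ, hd⟩ := Metric.continuousAt_iff.1 hcont ε hε
    exact ⟨δ, hδ, fun c' h => hd h⟩
  obtain ⟨ρ₁, hρ₁, hall⟩ := exists_uniform (List.range (σ c).length) _
    (fun j ρ ρ' h1 h2 hp => fun c' hd => hp c' (lt_of_lt_of_le hd h2)) hj
  obtain ⟨ρ₂, hρ₂, hball⟩ := Metric.mem_nhds_iff.1 (hA.mem_nhds rfl)
  refine ⟨min ρ₁ ρ₂, lt_min hρ₁ hρ₂, fun c' hd => ?_⟩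
  have hlen : (σ c').length = (σ c).length :=
    hball (Metric.mem_ball.2 (lt_of_lt_of_le hd (min_le_right _ _)))
  refine ⟨hlen, fun i => ?_⟩
  by_cases hi : i < (σ c).length
  · exact hall i (List.mem_range.2 hi) c' (lt_of_lt_of_le hd (min_le_left _ _))
  · rw [List.getD_eq_default _ _ (by omega), List.getD_eq_default _ _ (by omega)]
    simpa using hε

theorem iter_cont {σ : K → List K} (hσ : IsGenSubst σ) (k : ℕ) (a : K) :
    ∀ ε : ℝ, 0 < ε → ∃ r > 0, ∀ b, dist b a < r →
      GClose ε ((substWord σ)^[k] [b]) ((substWord σ)^[k] [a]) := by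
  induction k with
  | zero =>
    intro ε hε
    refine ⟨ε, hε, fun b hb => ⟨rfl, fun i => ?_⟩⟩
    cases i with
    | zero => simpa using hb
    | succ i => simp [List.getD_eq_default, hε]
  | succ k ih =>
    intro ε hε
    have hmem : ∀ c ∈ (substWord σ)^[k] [a], ∃ ρ > 0, ∀ c', dist c' c < ρ →
        GClose ε (σ c') (σ c) := fun c _ => subst_cont hσ c hε
    obtain ⟨ρ, hρ, hall⟩ := exists_uniform _ _
      (fun c r r' h1 h2 hp => fun c' hd => hp c' (lt_of_lt_of_le hd h2)) hmem
    obtain ⟨r, hr, hclose⟩ := ih ρ hρ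
    refine ⟨r, hr, fun b hb => ?_⟩
    have h1 := hclose b hb
    rw [Function.iterate_succ_apply', Function.iterate_succ_apply',
      substWord_eq_flatten, substWord_eq_flatten]
    refine gclose_flatten_map hε _ _ _ _ h1.1 fun i hi => ?_
    have hmem2 : ((substWord σ)^[k] [a]).getD i default ∈ (substWord σ)^[k] [a] := by
      have hi' : i < ((substWord σ)^[k] [a]).length := h1.1 ▸ hi
      rw [List.getD_eq_getElem _ _ hi']
      exact List.getElem_mem hi'
    exact hall _ hmem2 _ (h1.2 i)

end CloseLemmas

theorem window_length' {A : Type*} (x : ℤ → A) (i j : ℤ) :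
    (window x i j).length = (j - i + 1).toNat := by
  simp [window, ← List.map_eq_flatMap]

theorem window_getD' {A : Type*} [Inhabited A] (x : ℤ → A) (i j : ℤ) (t : ℕ)
    (ht : t < (j - i + 1).toNat) : (window x i j).getD t default = x (i + t) := by
  have h1 : t < (window x i j).length := by rw [window_length']; exact ht
  rw [List.getD_eq_getElem _ _ h1]
  simp [window, ← List.map_eq_flatMap]

theorem stmt18 {K : Type*} [MetricSpace K] [CompactSpace K]
    [TotallyDisconnectedSpace K] [Nontrivial K] [Inhabited K]
    (σ : K → List K) (hσ : IsGenSubst σ) (hprim : GPrimitive σ) :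
    ∀ x ∈ GXsub σ, GXsub σ ⊆ closure {y : ℤ → K | ∃ n : ℤ, shiftZ n x = y} := by
  intro x hx y hy
  rw [mem_closure_iff_nhds]
  intro U hU
  rw [nhds_pi] at hU
  obtain ⟨I, hIfin, V, hV, hIV⟩ := Filter.mem_pi.1 hU
  choose ε' hε'pos hball using fun i : ℤ => Metric.mem_nhds_iff.1 (hV i)
  obtain ⟨N, hN⟩ : ∃ N : ℕ, ∀ i ∈ I, i.natAbs ≤ N := by
    obtain ⟨N, hN⟩ := (hIfin.image Int.natAbs).bddAbove
    exact ⟨N, fun i hi => hN (Set.mem_image_of_mem _ hi)⟩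
  obtain ⟨εm, hεm, hεmle⟩ : ∃ e > 0, ∀ i ∈ I, e ≤ ε' i := by
    classical
    refine ⟨(insert (0:ℤ) hIfin.toFinset).inf' ⟨0, Finset.mem_insert_self _ _⟩ ε', ?_, ?_⟩
    · exact (Finset.lt_inf'_iff _).2 fun i _ => hε'pos i
    · intro i hi
      exact Finset.inf'_le _ (Finset.mem_insert_of_mem (hIfin.mem_toFinset.2 hi))
  set ε3 := εm / 3 with hε3def
  have hε3 : 0 < ε3 := by positivity
  obtain ⟨n, hn⟩ : ∃ n : ℤ, ∀ i : ℤ, -(N:ℤ) ≤ i → i ≤ N → dist (x (i + n)) (y i) < εm := by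
    -- the target word from y
    have hyN := hy (-(N:ℤ)) N (by omega)
    rw [Set.mem_iUnion] at hyN
    obtain ⟨a₀, hwmem⟩ := hyN
    have hwmem' : window y (-(N:ℤ)) N ∈
        closure {w : List K | ∃ k : ℕ, w <:+: (substWord σ)^[k] [a₀]} := hwmem
    obtain ⟨u, humem, hu_close⟩ := closure_extract hwmem' hε3
    obtain ⟨k₁, s₁, t₁, hu_eq⟩ := humem
    -- continuity of the k₁-th iterate at a₀, primitivity, bounds
    obtain ⟨r, hr, hWcont⟩ := iter_cont hσ k₁ a₀ ε3 hε3
    obtain ⟨j, hj⟩ := hprim (Metric.ball a₀ r) Metric.isOpen_ball ⟨a₀, Metric.mem_ball_self hr⟩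
    obtain ⟨astar, hCle⟩ := hσ.2.1.exists_forall_ge' default
      (by simp [Filter.cocompact_eq_bot])
    set C := (σ astar).length with hCdef
    have hC1 : 1 ≤ C := List.length_pos_iff.2 (hσ.1 astar)
    have hC : ∀ a, (σ a).length ≤ C := hCle
    set n₀ := k₁ + j with hn₀
    set L := C ^ n₀ with hLdef
    have hL1 : 1 ≤ L := Nat.one_le_pow _ _ (by omega)
    set M := 2 * L with hMdef
    -- a long window of x
    have hxM := hx 0 ((M:ℤ) - 1) (by omega)
    rw [Set.mem_iUnion] at hxM
    obtain ⟨b₀, hxmem⟩ := hxM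
    have hxmem' : window x 0 ((M:ℤ) - 1) ∈
        closure {w : List K | ∃ k : ℕ, w <:+: (substWord σ)^[k] [b₀]} := hxmem
    obtain ⟨u'', hu''mem, hx_close⟩ := closure_extract hxmem' hε3
    obtain ⟨k, hu''⟩ := hu''mem
    have hxwlen : (window x 0 ((M:ℤ)-1)).length = M := by rw [window_length']; omega
    have hu''len : u''.length = M := by rw [hx_close.1, hxwlen]
    have hkM : M ≤ ((substWord σ)^[k] [b₀]).length := by
      have := hu''.length_le; omega
    have hCk := iter_substWord_length_le hC k b₀
    have hkn : n₀ < k := by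
      by_contra hcon
      push_neg at hcon
      have h2 : C ^ k ≤ C ^ n₀ := Nat.pow_le_pow_right (by omega) hcon
      omega
    have hdecomp : (substWord σ)^[k] [b₀]
        = (((substWord σ)^[k - n₀] [b₀]).map fun c => (substWord σ)^[n₀] [c]).flatten := by
      conv_lhs => rw [show k = n₀ + (k - n₀) by omega]
      rw [Function.iterate_add_apply, iter_substWord_flatten]
    obtain ⟨c, hcmem, hcinf⟩ := exists_block_infix (fun c => (substWord σ)^[n₀] [c]) L hL1
      _ u'' (fun c _ => ⟨iter_substWord_length_le hC n₀ c, iter_substWord_ne_nil hσ.1 n₀ c⟩)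
      (hdecomp ▸ hu'') (by omega)
    obtain ⟨c', hc'mem, hc'ball⟩ := hj c j le_rfl
    have hWc' : (substWord σ)^[k₁] [c'] <:+: (substWord σ)^[n₀] [c] := by
      have hrw : (substWord σ)^[n₀] [c]
          = (((substWord σ)^[j] [c]).map fun d => (substWord σ)^[k₁] [d]).flatten := by
        rw [hn₀, Function.iterate_add_apply, iter_substWord_flatten]
      rw [hrw]
      exact infix_of_mem_flatten (fun d => (substWord σ)^[k₁] [d]) hc'mem
    obtain ⟨s₂, t₂, hs₂⟩ := hWc'.trans hcinf
    have hclose2 := hWcont c' (Metric.mem_ball.1 hc'ball)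
    refine ⟨(s₂.length : ℤ) + s₁.length + N, ?_⟩
    intro i hi1 hi2
    set t : ℕ := (i + N).toNat with ht
    have hti : (t : ℤ) = i + N := by omega
    have hwinlen : (window y (-(N:ℤ)) N).length = 2 * N + 1 := by rw [window_length']; omega
    have hulen : u.length = 2 * N + 1 := by rw [hu_close.1, hwinlen]
    have htu : t < u.length := by omega
    have e1 : (window y (-(N:ℤ)) N).getD t default = y i := by
      rw [window_getD' _ _ _ _ (by omega)]; congr 1; omega
    have e2 : ((substWord σ)^[k₁] [a₀]).getD (s₁.length + t) default = u.getD t default := by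
      rw [← hu_eq]; exact getD_middle _ _ _ t htu
    have hlenW : s₁.length + t < ((substWord σ)^[k₁] [c']).length := by
      have h5 := congrArg List.length hu_eq
      simp only [List.length_append] at h5
      rw [hclose2.1]; omega
    have e3 : u''.getD (s₂.length + (s₁.length + t)) default
        = ((substWord σ)^[k₁] [c']).getD (s₁.length + t) default := by
      rw [← hs₂]; exact getD_middle _ _ _ _ hlenW
    have hpM : s₂.length + (s₁.length + t) < M := by
      have h6 := congrArg List.length hs₂
      simp only [List.length_append] at h6
      omega
    have e4 : (window x 0 ((M:ℤ)-1)).getD (s₂.length + (s₁.length + t)) default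
        = x (i + ((s₂.length:ℤ) + s₁.length + N)) := by
      rw [window_getD' _ _ _ _ (by omega)]; congr 1; omega
    have d1 := hu_close.2 t
    rw [e1] at d1
    have d2 := hclose2.2 (s₁.length + t)
    rw [e2, ← e3] at d2
    have d3 := hx_close.2 (s₂.length + (s₁.length + t))
    rw [e4] at d3
    calc dist (x (i + ((s₂.length:ℤ) + s₁.length + N))) (y i)
        ≤ dist (x (i + ((s₂.length:ℤ) + s₁.length + N)))
            (u''.getD (s₂.length + (s₁.length + t)) default)
          + dist (u''.getD (s₂.length + (s₁.length + t)) default) (u.getD t default)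
          + dist (u.getD t default) (y i) := dist_triangle4 _ _ _ _
      _ < ε3 + ε3 + ε3 := by
          refine add_lt_add (add_lt_add ?_ d2) d1
          rw [dist_comm]; exact d3
      _ = εm := by rw [hε3def]; ring
  refine ⟨shiftZ n x, hIV (Set.mem_pi.2 fun i hi => ?_), n, rfl⟩
  have hna := hN i hi
  have h1 := hn i (by omega) (by omega)
  exact hball i (Metric.mem_ball.2 (lt_of_lt_of_le h1 (hεmle i hi)))
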